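/- For two types s, t (d-tuples of nonnegative integers, each summing to n), define λ_{st} = C(2n+d-1, n)^{-1} Π_{i=1}^d C(s_i + t_i, s_i). Then the matrix (λ_{st}) indexed by types is symmetric and bi-stochastic: for every type t, Σ_{s type} λ_{st} = 1. -/

import Mathlib

open scoped BigOperators

open Finset

/-- Convolution identity: `∑_{k+m=n} C(k+a,k) C(m+b,m) = C(n+a+b+1, n)`. -/
lemma conv_choose (n : ℕ) : ∀ a b : ℕ,
    ∑ p ∈ Finset.HasAntidiagonal.antidiagonal n, (p.1 + a).choose p.1 * (p.2 + b).choose p.2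
      = (n + a + b + 1).choose n := by
  induction n with
  | zero => simp
  | succ n ih =>
    intro a b
    induction a with
    | zero =>
      rw [Finset.Nat.sum_antidiagonal_succ]
      have h0 := ih 0 b
      simp only [Nat.add_zero, Nat.choose_self, one_mul, Nat.choose_zero_right,
        Nat.zero_add] at h0 ⊢
      rw [h0, show n + 1 + b = n + b + 1 from by omega]
      conv_rhs => rw [Nat.choose_succ_succ (n + b + 1) n]
      simp only [Nat.succ_eq_add_one]
      omega
    | succ a iha =>
      rw [Finset.Nat.sum_antidiagonal_succ]
      rw [Finset.Nat.sum_antidiagonal_succ] at iha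
      simp only [Nat.zero_add, Nat.choose_zero_right, one_mul] at iha ⊢
      have split : ∑ p ∈ Finset.HasAntidiagonal.antidiagonal n,
          (p.1 + 1 + (a + 1)).choose (p.1 + 1) * (p.2 + b).choose p.2
          = (n + (a + 1) + b + 1).choose n
            + ∑ p ∈ Finset.HasAntidiagonal.antidiagonal n,
              (p.1 + 1 + a).choose (p.1 + 1) * (p.2 + b).choose p.2 := by
        rw [← ih (a + 1) b, ← Finset.sum_add_distrib]
        refine Finset.sum_congr rfl fun p _ => ?_
        rw [show p.1 + 1 + (a + 1) = (p.1 + (a + 1)) + 1 from by omega,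
          Nat.choose_succ_succ, Nat.add_mul]
        congr 3
        omega
      rw [split]
      rw [show n + (a + 1) + b + 1 = n + a + b + 2 from by omega,
        show n + 1 + (a + 1) + b + 1 = (n + a + b + 2) + 1 from by omega]
      conv_rhs => rw [Nat.choose_succ_succ (n + a + b + 2) n]
      simp only [Nat.succ_eq_add_one]
      rw [show n + 1 + a + b + 1 = n + a + b + 2 from by omega] at iha
      omega

/-- Recursion for sums over `antidiagonalTuple (d+1) n`. -/
lemma sum_antidiagonalTuple_succ {M : Type*} [AddCommMonoid M] (d n : ℕ)
    (f : (Fin (d + 1) → ℕ) → M) :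
    ∑ s ∈ Finset.Nat.antidiagonalTuple (d + 1) n, f s
      = ∑ p ∈ Finset.HasAntidiagonal.antidiagonal n,
          ∑ s ∈ Finset.Nat.antidiagonalTuple d p.2, f (Fin.cons p.1 s) := by
  rw [Finset.sum_sigma']
  refine Finset.sum_nbij'
    (fun s => (⟨(s 0, ∑ i, Fin.tail s i), Fin.tail s⟩ : Σ _ : ℕ × ℕ, Fin d → ℕ))
    (fun x => Fin.cons x.1.1 x.2) ?_ ?_ ?_ ?_ ?_
  · intro s hs
    rw [Finset.Nat.mem_antidiagonalTuple] at hs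
    simp only [Finset.mem_sigma, Finset.HasAntidiagonal.mem_antidiagonal, Finset.Nat.mem_antidiagonalTuple]
    refine ⟨?_, trivial⟩
    rw [← hs, Fin.sum_univ_succ]
    rfl
  · intro x hx
    rw [Finset.mem_sigma, Finset.HasAntidiagonal.mem_antidiagonal, Finset.Nat.mem_antidiagonalTuple] at hx
    rw [Finset.Nat.mem_antidiagonalTuple, Fin.sum_univ_succ]
    simp only [Fin.cons_zero, Fin.cons_succ]
    rw [hx.2, hx.1]
  · intro s _
    simp only [Fin.cons_self_tail]
  · intro x hx
    rw [Finset.mem_sigma, Finset.Nat.mem_antidiagonalTuple] at hx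
    rcases x with ⟨⟨k, m⟩, s2⟩
    simp only [Fin.cons_zero, Fin.tail_cons]
    rw [hx.2]
  · intro s _
    simp only [Fin.cons_self_tail]

/-- The key combinatorial identity:
`∑_{s₁+⋯+s_{d+1}=n} ∏ᵢ C(sᵢ+tᵢ, sᵢ) = C(n + ∑tᵢ + d, n)`. -/
lemma key_identity : ∀ d (t : Fin (d + 1) → ℕ) (n : ℕ),
    ∑ s ∈ Finset.Nat.antidiagonalTuple (d + 1) n, ∏ i, (s i + t i).choose (s i)
      = (n + (∑ i, t i) + d).choose n := by
  intro d
  induction d with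
  | zero =>
    intro t n
    rw [Finset.Nat.antidiagonalTuple_one, Finset.sum_singleton]
    simp [Fin.sum_univ_one]
  | succ d ih =>
    intro t n
    rw [sum_antidiagonalTuple_succ]
    have inner : ∀ p ∈ Finset.HasAntidiagonal.antidiagonal n,
        ∑ s ∈ Finset.Nat.antidiagonalTuple (d + 1) p.2,
            ∏ i, ((Fin.cons p.1 s : Fin (d + 2) → ℕ) i + t i).choose
              ((Fin.cons p.1 s : Fin (d + 2) → ℕ) i)
          = (p.1 + t 0).choose p.1
            * (p.2 + ((∑ i : Fin (d + 1), t i.succ) + d)).choose p.2 := by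
      intro p _
      have step : ∀ s ∈ Finset.Nat.antidiagonalTuple (d + 1) p.2,
          ∏ i, ((Fin.cons p.1 s : Fin (d + 2) → ℕ) i + t i).choose
            ((Fin.cons p.1 s : Fin (d + 2) → ℕ) i)
          = (p.1 + t 0).choose p.1
            * ∏ i : Fin (d + 1), (s i + t i.succ).choose (s i) := by
        intro s _
        rw [Fin.prod_univ_succ]
        simp only [Fin.cons_zero, Fin.cons_succ]
      rw [Finset.sum_congr rfl step, ← Finset.mul_sum, ih (fun i => t i.succ) p.2]
      congr 2
      omega
    rw [Finset.sum_congr rfl inner, conv_choose n (t 0) ((∑ i : Fin (d + 1), t i.succ) + d)]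
    congr 1
    conv_rhs => rw [Fin.sum_univ_succ]
    omega

noncomputable section

/-- The matrix entry `λ_{st} = C(2n+d-1,n)⁻¹ ∏ᵢ C(sᵢ+tᵢ, sᵢ)` for two types `s, t`. -/
noncomputable def lam (d n : ℕ) (s t : Fin d → ℕ) : ℝ :=
  (((2 * n + d - 1).choose n : ℝ))⁻¹ * ∏ i, ((s i + t i).choose (s i) : ℝ)

/-- The matrix `(λ_{st})` indexed by types (d-tuples of nonnegative integers summing
to `n`) is symmetric and bi-stochastic. -/
theorem stmt11 (d n : ℕ) (hd : 0 < d) :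
    (∀ s t : Fin d → ℕ, lam d n s t = lam d n t s) ∧
    (∀ t : Fin d → ℕ, ∑ i, t i = n →
      ∑ s ∈ Finset.Nat.antidiagonalTuple d n, lam d n s t = 1) := by
  constructor
  · intro s t
    unfold lam
    congr 1
    apply Finset.prod_congr rfl
    intro i _
    norm_cast
    rw [Nat.add_comm (t i) (s i)]
    exact Nat.choose_symm_add
  · intro t ht
    obtain ⟨d', rfl⟩ : ∃ d', d = d' + 1 := ⟨d - 1, by omega⟩
    unfold lam
    rw [← Finset.mul_sum]
    have hcast : ∑ s ∈ Finset.Nat.antidiagonalTuple (d' + 1) n,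
        ∏ i, ((s i + t i).choose (s i) : ℝ)
        = ((∑ s ∈ Finset.Nat.antidiagonalTuple (d' + 1) n,
            ∏ i, (s i + t i).choose (s i) : ℕ) : ℝ) := by
      push_cast
      rfl
    rw [hcast, key_identity d' t n, ht]
    have h2 : 2 * n + (d' + 1) - 1 = n + n + d' := by omega
    rw [h2]
    rw [inv_mul_cancel₀]
    exact_mod_cast (Nat.choose_pos (by omega : n ≤ n + n + d')).ne'
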